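/- Let G be a graph on n vertices, v a vertex of minimum degree, D = N(v), and M ⊆ D. Then either (i) there exist a set J₁ ⊆ M with |J₁| ≥ |M|²/(4n) and two nonadjacent vertices x,y ∈ V(G)∖J₁ both adjacent to every vertex of J₁, or (ii) there is a clique J₂ ⊆ M with |J₂| ≥ |M|/4. -/

import Mathlib

open SimpleGraph Finset


/-- Let `v` be a vertex of minimum degree of `G`, `D = N(v)`, `M ⊆ D`. Then either
(i) there is `J₁ ⊆ M` with `|J₁| ≥ |M|²/(4n)` and two nonadjacent vertices
`x, y ∉ J₁` both adjacent to every vertex of `J₁`, or (ii) there is a clique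
`J₂ ⊆ M` with `|J₂| ≥ |M|/4`. -/
theorem stmt_13 {V : Type*} [Fintype V] [DecidableEq V] (G : SimpleGraph V)
    [DecidableRel G.Adj]
    (v : V) (hmin : ∀ u : V, G.degree v ≤ G.degree u)
    (M : Finset V) (hM : M ⊆ G.neighborFinset v) :
    (∃ J₁ : Finset V, J₁ ⊆ M ∧ (M.card : ℝ) ^ 2 / (4 * Fintype.card V) ≤ (J₁.card : ℝ) ∧
      ∃ x y : V, x ∉ J₁ ∧ y ∉ J₁ ∧ x ≠ y ∧ ¬G.Adj x y ∧
        (∀ u ∈ J₁, G.Adj x u) ∧ (∀ u ∈ J₁, G.Adj y u)) ∨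
    (∃ J₂ : Finset V, J₂ ⊆ M ∧ G.IsClique (J₂ : Set V) ∧
      (M.card : ℝ) / 4 ≤ (J₂.card : ℝ)) := by
  classical
  have hn0 : 0 < Fintype.card V := Fintype.card_pos_iff.mpr ⟨v⟩
  have hmn : M.card ≤ Fintype.card V := by
    simpa using card_le_card (subset_univ M)
  by_cases hcase : ∃ x y : V, x ≠ y ∧ ¬G.Adj x y ∧
      (M.card : ℝ) ^ 2 / (4 * Fintype.card V) ≤
        (((M ∩ G.neighborFinset x) ∩ G.neighborFinset y).card : ℝ)
  · obtain ⟨x, y, hxy, hadj, hcard⟩ := hcase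
    left
    refine ⟨(M ∩ G.neighborFinset x) ∩ G.neighborFinset y,
      fun u hu => (mem_inter.mp ((mem_inter.mp hu).1)).1, hcard, x, y, ?_, ?_, hxy, hadj,
      ?_, ?_⟩
    · intro hx
      exact G.irrefl ((mem_neighborFinset _ _ _).mp (mem_inter.mp ((mem_inter.mp hx).1)).2)
    · intro hy
      exact G.irrefl ((mem_neighborFinset _ _ _).mp (mem_inter.mp hy).2)
    · intro u hu
      exact (mem_neighborFinset _ _ _).mp (mem_inter.mp ((mem_inter.mp hu).1)).2
    · intro u hu
      exact (mem_neighborFinset _ _ _).mp (mem_inter.mp hu).2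
  · right
    push_neg at hcase
    set t : ℝ := (M.card : ℝ) ^ 2 / (4 * Fintype.card V) with ht
    have ht0 : 0 ≤ t := by positivity
    have htm : t ≤ (M.card : ℝ) / 4 := by
      rw [ht, div_le_div_iff₀ (by positivity) (by norm_num)]
      have h1 : (M.card : ℝ) ≤ (Fintype.card V : ℝ) := by exact_mod_cast hmn
      have h2 : (0:ℝ) ≤ (M.card : ℝ) := by positivity
      nlinarith
    set f : V → ℕ := fun z => (M \ insert z (G.neighborFinset z)).card with hf
    -- Step A : sum bound
    have hsum : (∑ z ∈ M, (f z : ℝ)) ≤ (M.card : ℝ) ^ 2 / 4 := by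
      set T : Finset V := insert v (G.neighborFinset v) with hT
      have ha : ∀ z ∈ M, f z ≤ (G.neighborFinset z \ T).card := by
        intro z hz
        have hzv : z ∈ G.neighborFinset v := hM hz
        have havz : G.Adj v z := (mem_neighborFinset _ _ _).mp hzv
        have h1 : f z ≤ (G.neighborFinset v \ insert z (G.neighborFinset z)).card := by
          apply card_le_card
          exact sdiff_subset_sdiff hM (le_refl _)
        have e1 : G.neighborFinset v ∩ insert z (G.neighborFinset z)
            = insert z (G.neighborFinset v ∩ G.neighborFinset z) := by
          ext w
          simp only [mem_inter, mem_insert]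
          constructor
          · rintro ⟨hw, h | h⟩
            · exact Or.inl h
            · exact Or.inr ⟨hw, h⟩
          · rintro (rfl | ⟨h1, h2⟩)
            · exact ⟨hzv, Or.inl rfl⟩
            · exact ⟨h1, Or.inr h2⟩
        have e2 : G.neighborFinset z ∩ T
            = insert v (G.neighborFinset z ∩ G.neighborFinset v) := by
          rw [hT]
          ext w
          simp only [mem_inter, mem_insert]
          constructor
          · rintro ⟨hw, h | h⟩
            · exact Or.inl h
            · exact Or.inr ⟨hw, h⟩
          · rintro (rfl | ⟨h1, h2⟩)
            · exact ⟨(mem_neighborFinset _ _ _).mpr (G.adj_symm havz), Or.inl rfl⟩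
            · exact ⟨h1, Or.inr h2⟩
        have c1 : (G.neighborFinset v \ insert z (G.neighborFinset z)).card
            + (G.neighborFinset v ∩ insert z (G.neighborFinset z)).card
            = G.degree v := by
          rw [card_sdiff_add_card_inter]; rfl
        have c2 : (G.neighborFinset z \ T).card + (G.neighborFinset z ∩ T).card
            = G.degree z := by
          rw [card_sdiff_add_card_inter]; rfl
        have d1 : (G.neighborFinset v ∩ insert z (G.neighborFinset z)).card
            = (G.neighborFinset v ∩ G.neighborFinset z).card + 1 := by
          rw [e1, card_insert_of_notMem]
          · simp [mem_neighborFinset]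
        have d2 : (G.neighborFinset z ∩ T).card
            = (G.neighborFinset z ∩ G.neighborFinset v).card + 1 := by
          rw [e2, card_insert_of_notMem]
          · simp [mem_neighborFinset]
        have d3 : (G.neighborFinset v ∩ G.neighborFinset z).card
            = (G.neighborFinset z ∩ G.neighborFinset v).card := by
          rw [inter_comm]
        have hdeg := hmin z
        omega
      have hb : ∑ z ∈ M, (G.neighborFinset z \ T).card
          = ∑ w ∈ univ \ T, (M ∩ G.neighborFinset w).card := by
        have key : ∀ z, G.neighborFinset z \ T
            = (univ \ T).filter (fun w => G.Adj z w) := by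
          intro z
          ext w
          simp [mem_neighborFinset, and_comm]
        calc ∑ z ∈ M, (G.neighborFinset z \ T).card
            = ∑ z ∈ M, ∑ w ∈ univ \ T, (if G.Adj z w then 1 else 0) := by
              refine Finset.sum_congr rfl fun z _ => ?_
              rw [key z, ← Finset.sum_filter]
              simp
          _ = ∑ w ∈ univ \ T, ∑ z ∈ M, (if G.Adj z w then 1 else 0) :=
              Finset.sum_comm
          _ = ∑ w ∈ univ \ T, (M ∩ G.neighborFinset w).card := by
              refine Finset.sum_congr rfl fun w _ => ?_
              rw [← Finset.sum_filter]
              simp only [sum_const, smul_eq_mul, mul_one]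
              congr 1
              ext z
              simp [mem_neighborFinset, adj_comm]
        -- done
      have hc : ∀ w ∈ univ \ T, ((M ∩ G.neighborFinset w).card : ℝ) ≤ t := by
        intro w hw
        rw [mem_sdiff, hT, mem_insert] at hw
        push_neg at hw
        obtain ⟨-, hwv, hwnb⟩ := hw
        have hnadj : ¬ G.Adj v w := by
          rw [← mem_neighborFinset]; exact hwnb
        have := hcase v w (Ne.symm hwv) hnadj
        have hMv : M ∩ G.neighborFinset v = M := inter_eq_left.mpr hM
        rw [hMv] at this
        exact le_of_lt this
      calc (∑ z ∈ M, (f z : ℝ))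
          ≤ ∑ z ∈ M, ((G.neighborFinset z \ T).card : ℝ) := by
            refine Finset.sum_le_sum fun z hz => ?_
            exact_mod_cast ha z hz
        _ = ∑ w ∈ univ \ T, ((M ∩ G.neighborFinset w).card : ℝ) := by
            exact_mod_cast congrArg Nat.cast hb
        _ ≤ ∑ w ∈ univ \ T, t := Finset.sum_le_sum hc
        _ = (univ \ T).card * t := by rw [sum_const, nsmul_eq_mul]
        _ ≤ (Fintype.card V : ℝ) * t := by
            apply mul_le_mul_of_nonneg_right _ ht0
            exact_mod_cast card_le_card (subset_univ _) |>.trans (le_of_eq card_univ)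
        _ = (M.card : ℝ) ^ 2 / 4 := by
            rw [ht]
            field_simp
    -- Step B : pair bound
    have hpair : ∀ x ∈ M, ∀ y ∈ M, x ≠ y → ¬G.Adj x y →
        3 * (M.card : ℝ) / 4 < (f x : ℝ) + (f y : ℝ) := by
      intro x hx y hy hne hnadj
      have hsub : M \ (G.neighborFinset x ∩ G.neighborFinset y)
          ⊆ (M \ insert x (G.neighborFinset x)) ∪ (M \ insert y (G.neighborFinset y)) := by
        intro u hu
        rw [mem_sdiff, mem_inter] at hu
        obtain ⟨huM, hu2⟩ := hu
        rw [mem_union, mem_sdiff, mem_sdiff, mem_insert, mem_insert]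
        push_neg
        by_cases hux : u ∈ G.neighborFinset x
        · have huy : u ∉ G.neighborFinset y := fun h => hu2 ⟨hux, h⟩
          refine Or.inr ⟨huM, ?_, huy⟩
          rintro rfl
          exact hnadj ((mem_neighborFinset _ _ _).mp hux)
        · by_cases hux' : u = x
          · subst hux'
            refine Or.inr ⟨huM, hne, ?_⟩
            rw [mem_neighborFinset]
            exact fun h => hnadj h.symm
          · exact Or.inl ⟨huM, hux', hux⟩
      have hcard1 : ((M ∩ G.neighborFinset x) ∩ G.neighborFinset y).card
          + (M \ (G.neighborFinset x ∩ G.neighborFinset y)).card = M.card := by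
        rw [inter_assoc]
        exact card_inter_add_card_sdiff M _
      have hcard2 : (M \ (G.neighborFinset x ∩ G.neighborFinset y)).card ≤ f x + f y :=
        le_trans (card_le_card hsub) (card_union_le _ _)
      have hlt := hcase x y hne hnadj
      have : (M.card : ℝ) < t + ((f x : ℝ) + (f y : ℝ)) := by
        have := hcard1
        have h2 : ((M ∩ G.neighborFinset x ∩ G.neighborFinset y).card : ℝ)
            + ((M \ (G.neighborFinset x ∩ G.neighborFinset y)).card : ℝ) = (M.card : ℝ) := by
          exact_mod_cast hcard1
        have h3 : ((M \ (G.neighborFinset x ∩ G.neighborFinset y)).card : ℝ)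
            ≤ (f x : ℝ) + (f y : ℝ) := by exact_mod_cast hcard2
        linarith
      linarith
    -- Step C : clique
    set B : Finset V := M.filter (fun z => 3 * (M.card : ℝ) / 8 ≤ (f z : ℝ)) with hB
    have hBsum : 3 * (M.card : ℝ) / 8 * B.card ≤ (M.card : ℝ) ^ 2 / 4 := by
      calc 3 * (M.card : ℝ) / 8 * B.card = ∑ _z ∈ B, 3 * (M.card : ℝ) / 8 := by
            rw [sum_const, nsmul_eq_mul]; ring
        _ ≤ ∑ z ∈ B, (f z : ℝ) :=
            Finset.sum_le_sum fun z hz => (mem_filter.mp hz).2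
        _ ≤ ∑ z ∈ M, (f z : ℝ) :=
            Finset.sum_le_sum_of_subset_of_nonneg (filter_subset _ _)
              (fun z _ _ => by positivity)
        _ ≤ _ := hsum
    have hBcard : (B.card : ℝ) ≤ 2 * (M.card : ℝ) / 3 := by
      rcases Nat.eq_zero_or_pos M.card with h0 | hpos
      · have hMe : M = ∅ := card_eq_zero.mp h0
        simp [hB, hMe]
      · have hmR : (0 : ℝ) < (M.card : ℝ) := by exact_mod_cast hpos
        nlinarith
    refine ⟨M \ B, sdiff_subset, ?_, ?_⟩
    · intro x hx y hy hne
      rw [Finset.mem_coe, mem_sdiff] at hx hy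
      by_contra hnadj
      have h1 := hpair x hx.1 y hy.1 hne hnadj
      have h2 : (f x : ℝ) < 3 * (M.card : ℝ) / 8 := by
        by_contra h
        exact hx.2 (mem_filter.mpr ⟨hx.1, le_of_not_gt h⟩)
      have h3 : (f y : ℝ) < 3 * (M.card : ℝ) / 8 := by
        by_contra h
        exact hy.2 (mem_filter.mpr ⟨hy.1, le_of_not_gt h⟩)
      linarith
    · have hBM : B ⊆ M := filter_subset _ _
      have : (M \ B).card + B.card = M.card := card_sdiff_add_card_eq_card hBM
      have hc : ((M \ B).card : ℝ) + (B.card : ℝ) = (M.card : ℝ) := by exact_mod_cast this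
      linarith
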